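/- As formal power series in two variables y and z (or for real |y|, |z| < 1): ∏_{m,n ≥ 0} (1 + y^{2^m} z^{2^n}) = (1/(1 - yz)) · ∏_{k ≥ 1} 1/((1 - y^{2^k} z)(1 - y z^{2^k})). Combinatorially: the number of partitions of the vector ⟨m,n⟩ into distinct parts of the form ⟨2^a, 2^b⟩ (a,b ≥ 0) equals the number of partitions of ⟨m,n⟩ into unrestricted parts of the form ⟨1, 2^b⟩ or ⟨2^a, 1⟩. -/

import Mathlib

open Filter Topology

private lemma abs_log_one_add_le {t r : ℝ} (ht : |t| ≤ r) (hr : r < 1) :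
    |Real.log (1 + t)| ≤ |t| / (1 - r) := by
  obtain ⟨h1, h2⟩ := abs_le.1 ht
  have hpos : (0:ℝ) < 1 + t := by linarith
  have hr1 : (0:ℝ) < 1 - r := by linarith
  rw [abs_le]
  constructor
  · have hlog : -Real.log (1 + t) ≤ (1 + t)⁻¹ - 1 := by
      rw [← Real.log_inv]
      exact Real.log_le_sub_one_of_pos (by positivity)
    have heq : (1 + t)⁻¹ - 1 = -t / (1 + t) := by field_simp; ring
    have h4 : -t / (1 + t) ≤ |t| / (1 - r) :=
      div_le_div₀ (abs_nonneg t) (neg_le_abs t) hr1 (by linarith)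
    rw [heq] at hlog
    linarith
  · have hlog : Real.log (1 + t) ≤ (1 + t) - 1 := Real.log_le_sub_one_of_pos hpos
    have h5 : |t| ≤ |t| / (1 - r) := by
      rw [le_div_iff₀ hr1]
      nlinarith [abs_nonneg t]
    have := le_abs_self t
    linarith

private lemma summable_log_one_add {ι : Type*} (f : ι → ℝ) (r : ℝ) (hr : r < 1)
    (hb : ∀ i, |f i| ≤ r) (hs : Summable fun i => |f i|) :
    Summable fun i => Real.log (1 + f i) := by
  refine Summable.of_norm_bounded (g := fun i => |f i| / (1 - r)) (hs.div_const _) fun i => ?_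
  simpa [Real.norm_eq_abs] using abs_log_one_add_le (hb i) hr

private lemma mult_aux {ι : Type*} (f : ι → ℝ) (hp : ∀ i, 0 < f i)
    (hs : Summable fun i => Real.log (f i)) : Multipliable f :=
  Real.multipliable_of_summable_log hp hs

private lemma multipliable_one_add {ι : Type*} (f : ι → ℝ) (r : ℝ) (hr : r < 1)
    (hb : ∀ i, |f i| ≤ r) (hs : Summable fun i => |f i|) :
    Multipliable fun i => 1 + f i := by
  refine mult_aux _ (fun i => ?_) (summable_log_one_add f r hr hb hs)
  have := abs_le.1 (hb i)
  linarith

private lemma multipliable_inv_one_sub {ι : Type*} (f : ι → ℝ) (r : ℝ) (hr : r < 1)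
    (hb : ∀ i, |f i| ≤ r) (hs : Summable fun i => |f i|) :
    Multipliable fun i => 1 / (1 - f i) := by
  refine mult_aux _ (fun i => ?_) ?_
  · have := abs_le.1 (hb i)
    have : 0 < 1 - f i := by linarith [this.2]
    positivity
  · have heq : (fun i => Real.log (1 / (1 - f i))) = fun i => -Real.log (1 + -f i) :=
      funext fun i => by rw [one_div, Real.log_inv, sub_eq_add_neg]
    rw [heq]
    exact (summable_log_one_add (fun i => -f i) r hr (by simpa using hb) (by simpa using hs)).neg

private lemma prod_range_one_add (w : ℝ) (N : ℕ) :
    (1 - w) * ∏ j ∈ Finset.range N, (1 + w ^ 2 ^ j) = 1 - w ^ 2 ^ N := by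
  induction N with
  | zero => simp
  | succ n ih =>
    rw [Finset.prod_range_succ, ← mul_assoc, ih, pow_succ 2 n, pow_mul]
    ring

private def diagEquiv : ℤ × ℕ ≃ ℕ × ℕ where
  toFun q := if 0 ≤ q.1 then (q.2 + q.1.toNat, q.2) else (q.2, q.2 + (-q.1).toNat)
  invFun p := ((p.1 : ℤ) - (p.2 : ℤ), min p.1 p.2)
  left_inv := by
    rintro ⟨d, j⟩
    dsimp only
    split_ifs with h <;> simp only [Prod.mk.injEq, min_def, and_true, true_and] <;> split_ifs <;> omega
  right_inv := by
    rintro ⟨m, n⟩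
    dsimp only
    simp only [min_def]
    split_ifs <;> simp only [Prod.mk.injEq, and_true, true_and] <;> omega

private lemma summable_abs_pow_two_pow {w : ℝ} (hw : |w| < 1) :
    Summable fun j : ℕ => |w| ^ 2 ^ j := by
  refine Summable.of_nonneg_of_le (fun j => by positivity)
    (fun j => pow_le_pow_of_le_one (abs_nonneg w) hw.le (Nat.lt_two_pow_self (n := j)).le)
    (summable_geometric_of_lt_one (abs_nonneg w) hw)

private lemma euler {w : ℝ} (hw : |w| < 1) :
    HasProd (fun j : ℕ => 1 + w ^ 2 ^ j) (1 / (1 - w)) := by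
  have hb : ∀ j : ℕ, |w ^ 2 ^ j| ≤ |w| := fun j => by
    rw [abs_pow]
    calc |w| ^ 2 ^ j ≤ |w| ^ 1 :=
          pow_le_pow_of_le_one (abs_nonneg w) hw.le Nat.one_le_two_pow
      _ = |w| := pow_one _
  have hs : Summable fun j : ℕ => |w ^ 2 ^ j| := by
    simpa [abs_pow] using summable_abs_pow_two_pow hw
  have hm : Multipliable fun j : ℕ => 1 + w ^ 2 ^ j :=
    multipliable_one_add _ |w| hw hb hs
  rw [hm.hasProd_iff_tendsto_nat]
  have h1 : (1:ℝ) - w ≠ 0 := by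
    have := abs_lt.1 hw
    intro h
    linarith [this.2]
  have ht : Tendsto (fun N : ℕ => w ^ 2 ^ N) atTop (𝓝 0) :=
    (tendsto_pow_atTop_nhds_zero_of_abs_lt_one hw).comp
      (tendsto_pow_atTop_atTop_of_one_lt (one_lt_two : 1 < (2:ℕ)))
  have ht2 : Tendsto (fun N : ℕ => (1 - w ^ 2 ^ N) / (1 - w)) atTop (𝓝 (1 / (1 - w))) := by
    have := ((tendsto_const_nhds (x := (1:ℝ))).sub ht).div_const (1 - w)
    simpa using this
  refine ht2.congr fun N => ?_
  rw [eq_comm, eq_div_iff h1, mul_comm]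
  exact prod_range_one_add w N

set_option maxHeartbeats 2000000 in
theorem stmt_18 (y z : ℝ) (hy : |y| < 1) (hz : |z| < 1) :
    ∏' p : ℕ × ℕ, (1 + y ^ 2 ^ p.1 * z ^ 2 ^ p.2) =
      (1 / (1 - y * z)) *
        ∏' k : ℕ+, 1 / ((1 - y ^ 2 ^ (k : ℕ) * z) * (1 - y * z ^ 2 ^ (k : ℕ))) := by
  set r : ℝ := |y| * |z| with hrdef
  have hr : r < 1 := by nlinarith [abs_nonneg y, abs_nonneg z]
  have hy' : ∀ t : ℕ, |y| ^ 2 ^ t ≤ |y| := fun t => by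
    calc |y| ^ 2 ^ t ≤ |y| ^ 1 :=
          pow_le_pow_of_le_one (abs_nonneg y) hy.le Nat.one_le_two_pow
      _ = |y| := pow_one _
  have hz' : ∀ t : ℕ, |z| ^ 2 ^ t ≤ |z| := fun t => by
    calc |z| ^ 2 ^ t ≤ |z| ^ 1 :=
          pow_le_pow_of_le_one (abs_nonneg z) hz.le Nat.one_le_two_pow
      _ = |z| := pow_one _
  set A : ℤ → ℝ := fun d => if 0 ≤ d then y ^ 2 ^ d.toNat * z else y * z ^ 2 ^ (-d).toNat
    with hA
  have habs : ∀ d, |A d| ≤ r := by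
    intro d
    simp only [hA]
    split_ifs with h
    · rw [abs_mul, abs_pow]
      exact mul_le_mul_of_nonneg_right (hy' _) (abs_nonneg z)
    · rw [abs_mul, abs_pow]
      exact mul_le_mul_of_nonneg_left (hz' _) (abs_nonneg y)
  have habslt : ∀ d, |A d| < 1 := fun d => lt_of_le_of_lt (habs d) hr
  have hcomp : ∀ q : ℤ × ℕ, (1 + y ^ 2 ^ (diagEquiv q).1 * z ^ 2 ^ (diagEquiv q).2)
      = 1 + A q.1 ^ 2 ^ q.2 := by
    rintro ⟨d, j⟩
    simp only [diagEquiv, Equiv.coe_fn_mk, hA]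
    split_ifs with h
    · have e1 : (y ^ 2 ^ d.toNat * z) ^ 2 ^ j = y ^ 2 ^ (j + d.toNat) * z ^ 2 ^ j := by
        rw [mul_pow, ← pow_mul, ← pow_add, add_comm d.toNat j]
      rw [e1]
    · have e2 : (y * z ^ 2 ^ (-d).toNat) ^ 2 ^ j = y ^ 2 ^ j * z ^ 2 ^ (j + (-d).toNat) := by
        rw [mul_pow, ← pow_mul, ← pow_add, add_comm (-d).toNat j]
      rw [e2]
  -- multipliability of the double product
  have hSy := summable_abs_pow_two_pow hy
  have hSz := summable_abs_pow_two_pow hz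
  have hS : Summable fun p : ℕ × ℕ => |y ^ 2 ^ p.1 * z ^ 2 ^ p.2| := by
    have h := hSy.mul_of_nonneg hSz (fun m => by positivity) (fun n => by positivity)
    refine h.congr fun p => ?_
    rw [abs_mul, abs_pow, abs_pow]
  have hFb : ∀ p : ℕ × ℕ, |y ^ 2 ^ p.1 * z ^ 2 ^ p.2| ≤ r := fun p => by
    rw [abs_mul, abs_pow, abs_pow]
    exact mul_le_mul (hy' _) (hz' _) (by positivity) (abs_nonneg y)
  have hF : Multipliable fun p : ℕ × ℕ => 1 + y ^ 2 ^ p.1 * z ^ 2 ^ p.2 :=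
    multipliable_one_add _ r hr hFb hS
  have hG : Multipliable fun q : ℤ × ℕ => 1 + A q.1 ^ 2 ^ q.2 := by
    have h := (diagEquiv.multipliable_iff
      (f := fun p : ℕ × ℕ => 1 + y ^ 2 ^ p.1 * z ^ 2 ^ p.2)).2 hF
    exact h.congr hcomp
  have hstep1 : ∏' p : ℕ × ℕ, (1 + y ^ 2 ^ p.1 * z ^ 2 ^ p.2)
      = ∏' d : ℤ, 1 / (1 - A d) :=
    calc ∏' p : ℕ × ℕ, (1 + y ^ 2 ^ p.1 * z ^ 2 ^ p.2)
        = ∏' q : ℤ × ℕ, (1 + y ^ 2 ^ (diagEquiv q).1 * z ^ 2 ^ (diagEquiv q).2) :=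
          (diagEquiv.tprod_eq fun p : ℕ × ℕ => 1 + y ^ 2 ^ p.1 * z ^ 2 ^ p.2).symm
      _ = ∏' q : ℤ × ℕ, (1 + A q.1 ^ 2 ^ q.2) := tprod_congr hcomp
      _ = ∏' d : ℤ, ∏' j : ℕ, (1 + A d ^ 2 ^ j) :=
          hG.tprod_prod' fun d => (euler (habslt d)).multipliable
      _ = ∏' d : ℤ, 1 / (1 - A d) := tprod_congr fun d => (euler (habslt d)).tprod_eq
  -- values of A
  have hA0 : A 0 = y * z := by simp [hA]
  have hApos : ∀ n : ℕ, A ((n : ℤ) + 1) = y ^ 2 ^ (n + 1) * z := by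
    intro n
    have h0 : (0:ℤ) ≤ (n:ℤ) + 1 := by positivity
    have h1 : ((n:ℤ) + 1).toNat = n + 1 := by omega
    simp only [hA, if_pos h0, h1]
  have hAneg : ∀ n : ℕ, A (-((n : ℤ) + 1)) = y * z ^ 2 ^ (n + 1) := by
    intro n
    have h0 : ¬ (0:ℤ) ≤ -((n:ℤ) + 1) := by omega
    have h1 : (-(-((n:ℤ) + 1))).toNat = n + 1 := by omega
    simp only [hA, if_neg h0, h1]
  -- multipliability of the two one-sided products
  have hbP : ∀ n : ℕ, |y ^ 2 ^ (n + 1) * z| ≤ r := fun n => by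
    rw [abs_mul, abs_pow]
    exact mul_le_mul_of_nonneg_right (hy' _) (abs_nonneg z)
  have hsP : Summable fun n : ℕ => |y ^ 2 ^ (n + 1) * z| := by
    refine Summable.of_nonneg_of_le (fun n => abs_nonneg _) (fun n => ?_)
      (summable_geometric_of_lt_one (abs_nonneg y) hy)
    rw [abs_mul, abs_pow]
    calc |y| ^ 2 ^ (n + 1) * |z| ≤ |y| ^ 2 ^ (n + 1) * 1 :=
          mul_le_mul_of_nonneg_left hz.le (by positivity)
      _ = |y| ^ 2 ^ (n + 1) := mul_one _
      _ ≤ |y| ^ n := pow_le_pow_of_le_one (abs_nonneg y) hy.le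
          (by have := Nat.lt_two_pow_self (n := n); calc n ≤ 2 ^ n := this.le
                _ ≤ 2 ^ (n + 1) := Nat.pow_le_pow_right (by norm_num) (Nat.le_succ n))
  have hP : Multipliable fun n : ℕ => 1 / (1 - y ^ 2 ^ (n + 1) * z) :=
    multipliable_inv_one_sub _ r hr hbP hsP
  have hbQ : ∀ n : ℕ, |y * z ^ 2 ^ (n + 1)| ≤ r := fun n => by
    rw [abs_mul, abs_pow]
    exact mul_le_mul_of_nonneg_left (hz' _) (abs_nonneg y)
  have hsQ : Summable fun n : ℕ => |y * z ^ 2 ^ (n + 1)| := by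
    refine Summable.of_nonneg_of_le (fun n => abs_nonneg _) (fun n => ?_)
      (summable_geometric_of_lt_one (abs_nonneg z) hz)
    rw [abs_mul, abs_pow]
    calc |y| * |z| ^ 2 ^ (n + 1) ≤ 1 * |z| ^ 2 ^ (n + 1) :=
          mul_le_mul_of_nonneg_right hy.le (by positivity)
      _ = |z| ^ 2 ^ (n + 1) := one_mul _
      _ ≤ |z| ^ n := pow_le_pow_of_le_one (abs_nonneg z) hz.le
          (by have := Nat.lt_two_pow_self (n := n); calc n ≤ 2 ^ n := this.le
                _ ≤ 2 ^ (n + 1) := Nat.pow_le_pow_right (by norm_num) (Nat.le_succ n))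
  have hQ : Multipliable fun n : ℕ => 1 / (1 - y * z ^ 2 ^ (n + 1)) :=
    multipliable_inv_one_sub _ r hr hbQ hsQ
  have hPm : Multipliable fun n : ℕ => 1 / (1 - A ((n : ℤ) + 1)) :=
    hP.congr fun n => by rw [hApos n]
  have hQm : Multipliable fun n : ℕ => 1 / (1 - A (-((n : ℤ) + 1))) :=
    hQ.congr fun n => by rw [hAneg n]
  have hsplit := tprod_of_add_one_of_neg_add_one (f := fun d : ℤ => 1 / (1 - A d)) hPm hQm
  -- rewrite the pieces
  have hposprod : (∏' n : ℕ, 1 / (1 - A ((n : ℤ) + 1)))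
      = ∏' n : ℕ, 1 / (1 - y ^ 2 ^ (n + 1) * z) := tprod_congr fun n => by rw [hApos n]
  have hnegprod : (∏' n : ℕ, 1 / (1 - A (-((n : ℤ) + 1))))
      = ∏' n : ℕ, 1 / (1 - y * z ^ 2 ^ (n + 1)) := tprod_congr fun n => by rw [hAneg n]
  -- RHS re-indexing
  have hRHS : (∏' k : ℕ+, 1 / ((1 - y ^ 2 ^ (k : ℕ) * z) * (1 - y * z ^ 2 ^ (k : ℕ))))
      = (∏' n : ℕ, 1 / (1 - y ^ 2 ^ (n + 1) * z)) *
        ∏' n : ℕ, 1 / (1 - y * z ^ 2 ^ (n + 1)) := by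
    refine (Equiv.pnatEquivNat.symm.tprod_eq
      (fun k : ℕ+ => 1 / ((1 - y ^ 2 ^ (k : ℕ) * z) * (1 - y * z ^ 2 ^ (k : ℕ))))).symm.trans
      ((tprod_congr fun n => ?_).trans (hP.tprod_mul hQ))
    have hn : ((Equiv.pnatEquivNat.symm n : ℕ+) : ℕ) = n + 1 := by
      simp [Equiv.pnatEquivNat, Nat.succPNat]
    rw [hn, one_div, mul_inv, ← one_div, ← one_div]
  calc ∏' p : ℕ × ℕ, (1 + y ^ 2 ^ p.1 * z ^ 2 ^ p.2)
      = ∏' d : ℤ, 1 / (1 - A d) := hstep1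
    _ = (∏' n : ℕ, 1 / (1 - A ((n : ℤ) + 1))) * (1 / (1 - A 0)) *
        ∏' n : ℕ, 1 / (1 - A (-((n : ℤ) + 1))) := hsplit
    _ = (1 / (1 - y * z)) *
        ∏' k : ℕ+, 1 / ((1 - y ^ 2 ^ (k : ℕ) * z) * (1 - y * z ^ 2 ^ (k : ℕ))) := by
      rw [hposprod, hnegprod, hA0, hRHS]
      ring
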